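/- Let b, c, d, e, p₀, q₀ ∈ ℚ with b ≠ 0, c·e ≠ 0, p₀ ≠ 0, and set m = p₀² + b·q₀². Assume m ≠ 0, that −b is not the square of a rational number, and that the quartic polynomial f(X) = m²X⁴ + c(dX + e)² has nonzero discriminant. If the set of rational points (U, w) ∈ ℚ² satisfying w² = −b(2b²U⁴ − b·c·d²·U² − 2c·e²·m²) is infinite, then the set of X ∈ ℚ for which there exist p, q ∈ ℚ with (p² + b·q²)² = m²X⁴ + c(dX + e)² is infinite. -/

import Mathlib

open Polynomial

-- squares of a fixed value form a finite set
lemma sq_set_finite (K : ℚ) : {w : ℚ | w ^ 2 = K}.Finite := by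
  apply Set.Finite.subset (Polynomial.finite_setOf_isRoot
    (p := (X ^ 2 - C K : ℚ[X])) ?_)
  · intro w hw
    simp only [Set.mem_setOf_eq] at hw
    simp [Polynomial.IsRoot, hw]
  · intro h
    have := congrArg (fun p => Polynomial.coeff p 2) h
    simp [Polynomial.coeff_X_pow] at this

theorem stmt_0 (b c d e p₀ q₀ m : ℚ) (hb : b ≠ 0) (hce : c * e ≠ 0) (hp₀ : p₀ ≠ 0)
    (hm : m = p₀ ^ 2 + b * q₀ ^ 2) (hm0 : m ≠ 0)
    (hirr : ¬ IsSquare (-b))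
    (hdisc : (C (m ^ 2) * X ^ 4 + C c * (C d * X + C e) ^ 2 : ℚ[X]).Separable)
    (hinf : {P : ℚ × ℚ | P.2 ^ 2 =
      -b * (2 * b ^ 2 * P.1 ^ 4 - b * c * d ^ 2 * P.1 ^ 2 - 2 * c * e ^ 2 * m ^ 2)}.Infinite) :
    {x : ℚ | ∃ p q : ℚ, (p ^ 2 + b * q ^ 2) ^ 2 = m ^ 2 * x ^ 4 + c * (d * x + e) ^ 2}.Infinite := by
  set Curve : Set (ℚ × ℚ) := {P : ℚ × ℚ | P.2 ^ 2 =
      -b * (2 * b ^ 2 * P.1 ^ 4 - b * c * d ^ 2 * P.1 ^ 2 - 2 * c * e ^ 2 * m ^ 2)} with hCurve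
  set Bad : Set (ℚ × ℚ) := {P : ℚ × ℚ | P ∈ Curve ∧ (P.1 = 0 ∨ 2 * b * P.1 ^ 2 - c * d ^ 2 = 0)}
    with hBad
  set Good : Set (ℚ × ℚ) := Curve \ Bad with hGood
  set φ : ℚ × ℚ → ℚ :=
    fun P => (c * d * e + (P.1 / m) * P.2) / (2 * b * P.1 ^ 2 - c * d ^ 2) with hφ
  -- Bad is finite
  have hT : ({u : ℚ | u = 0 ∨ 2 * b * u ^ 2 - c * d ^ 2 = 0}).Finite := by
    apply Set.Finite.subset (Set.Finite.union (Set.finite_singleton 0)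
      (sq_set_finite (c * d ^ 2 / (2 * b))))
    intro u hu
    rcases hu with h | h
    · exact Or.inl h
    · right
      have : u ^ 2 = c * d ^ 2 / (2 * b) := by field_simp; linarith
      exact this
  have hBadFin : Bad.Finite := by
    have : Bad ⊆ ⋃ u ∈ {u : ℚ | u = 0 ∨ 2 * b * u ^ 2 - c * d ^ 2 = 0},
        (fun w => (u, w)) '' {w : ℚ | w ^ 2 =
          -b * (2 * b ^ 2 * u ^ 4 - b * c * d ^ 2 * u ^ 2 - 2 * c * e ^ 2 * m ^ 2)} := by
      rintro ⟨u, w⟩ ⟨hc, hbad⟩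
      refine Set.mem_biUnion hbad ⟨w, hc, rfl⟩
    exact Set.Finite.subset (Set.Finite.biUnion hT
      (fun u _ => (sq_set_finite _).image _)) this
  have hGoodInf : Good.Infinite := hinf.diff hBadFin
  -- membership lemma
  have hmem : ∀ P ∈ Good, φ P ∈ {x : ℚ | ∃ p q : ℚ,
      (p ^ 2 + b * q ^ 2) ^ 2 = m ^ 2 * x ^ 4 + c * (d * x + e) ^ 2} := by
    rintro ⟨U, w⟩ ⟨hc, hnb⟩
    simp only [hBad, hCurve, Set.mem_setOf_eq, not_and_or, not_or] at hnb hc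
    have hnb' : U ≠ 0 ∧ 2 * b * U ^ 2 - c * d ^ 2 ≠ 0 := by
      rcases hnb with h | h
      · exact absurd hc h
      · exact h
    obtain ⟨hU0, hA0⟩ := hnb'
    set s : ℚ := U / m with hs
    have hUs : U = m * s := by rw [hs]; field_simp
    set A : ℚ := 2 * b * U ^ 2 - c * d ^ 2 with hA
    set x : ℚ := (c * d * e + s * w) / A with hx
    have hφP : φ (U, w) = x := rfl
    rw [hφP]
    -- key quadratic identity
    have h1 : A * x ^ 2 - 2 * (c * d * e) * x + (b ^ 2 * m ^ 2 * s ^ 4 - c * e ^ 2) = 0 := by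
      have hxA : A * x = c * d * e + s * w := by rw [hx]; field_simp
      have hw2 : w ^ 2 = -b * (2 * b ^ 2 * U ^ 4 - b * c * d ^ 2 * U ^ 2
          - 2 * c * e ^ 2 * m ^ 2) := hc
      have key : A * (A * x ^ 2 - 2 * (c * d * e) * x
          + (b ^ 2 * m ^ 2 * s ^ 4 - c * e ^ 2)) = 0 := by
        have expand : A * (A * x ^ 2 - 2 * (c * d * e) * x
            + (b ^ 2 * m ^ 2 * s ^ 4 - c * e ^ 2))
            = (A * x) ^ 2 - 2 * (c * d * e) * (A * x)
              + (b ^ 2 * m ^ 2 * s ^ 4 - c * e ^ 2) * A := by ring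
        rw [expand, hxA]
        have hA' : A = 2 * b * m ^ 2 * s ^ 2 - c * d ^ 2 := by rw [hA, hUs]; ring
        rw [hA']
        have hw2' : w ^ 2 = b * m ^ 2 * (b * c * d ^ 2 * s ^ 2 + 2 * c * e ^ 2
            - 2 * b ^ 2 * m ^ 2 * s ^ 4) := by
          rw [hw2, hUs]; ring
        linear_combination s ^ 2 * hw2'
      exact (mul_eq_zero.mp key).resolve_left hA0
    refine ⟨p₀ * x - b * q₀ * s, q₀ * x + p₀ * s, ?_⟩
    have h2 : (p₀ * x - b * q₀ * s) ^ 2 + b * (q₀ * x + p₀ * s) ^ 2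
        = m * (x ^ 2 + b * s ^ 2) := by
      linear_combination (x ^ 2 + b * s ^ 2) * hm.symm
    rw [h2]
    have hA' : A = 2 * b * m ^ 2 * s ^ 2 - c * d ^ 2 := by rw [hA, hUs]; ring
    rw [hA'] at h1
    linear_combination h1
  -- the image is infinite
  have himg : (φ '' Good).Infinite := by
    intro hfin
    apply hGoodInf
    have hsub : Good ⊆ ⋃ x ∈ φ '' Good, {P ∈ Good | φ P = x} := by
      intro P hP
      exact Set.mem_biUnion (Set.mem_image_of_mem φ hP) ⟨hP, rfl⟩
    refine Set.Finite.subset (Set.Finite.biUnion hfin (fun x _ => ?_)) hsub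
    -- fiber over x is finite
    set R : ℚ[X] := C (2 * b ^ 3) * X ^ 6 + C (4 * b ^ 2 * m ^ 2 * x ^ 2 - b ^ 2 * c * d ^ 2) * X ^ 4
      + C (-4 * b * m ^ 2 * x * (c * d ^ 2 * x + c * d * e) - 2 * b * c * e ^ 2 * m ^ 2) * X ^ 2
      + C (m ^ 2 * (c * d ^ 2 * x + c * d * e) ^ 2) with hR
    have hRne : R ≠ 0 := by
      intro h
      have h6 := congrArg (fun p => Polynomial.coeff p 6) h
      simp only [hR, Polynomial.coeff_add, Polynomial.coeff_C_mul, Polynomial.coeff_X_pow,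
        Polynomial.coeff_C, Polynomial.coeff_zero] at h6
      norm_num at h6
      exact hb (by nlinarith [h6])
    have : {P ∈ Good | φ P = x} ⊆
        (fun u => (u, m * (x * (2 * b * u ^ 2 - c * d ^ 2) - c * d * e) / u)) ''
          {u : ℚ | R.IsRoot u} := by
      rintro ⟨U, w⟩ ⟨⟨hc, hnb⟩, hφx⟩
      simp only [hBad, hCurve, Set.mem_setOf_eq, not_and_or, not_or] at hnb hc
      have hnb' : U ≠ 0 ∧ 2 * b * U ^ 2 - c * d ^ 2 ≠ 0 := by
        rcases hnb with h | h
        · exact absurd hc h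
        · exact h
      obtain ⟨hU0, hA0⟩ := hnb'
      have hφx' : (c * d * e + (U / m) * w) / (2 * b * U ^ 2 - c * d ^ 2) = x := hφx
      have hw : U * w = m * (x * (2 * b * U ^ 2 - c * d ^ 2) - c * d * e) := by
        rw [div_eq_iff hA0] at hφx'
        field_simp at hφx'
        linear_combination hφx'
      refine ⟨U, ?_, ?_⟩
      · show R.IsRoot U
        have hev : R.eval U = 2 * b ^ 3 * U ^ 6
            + (4 * b ^ 2 * m ^ 2 * x ^ 2 - b ^ 2 * c * d ^ 2) * U ^ 4
            + (-4 * b * m ^ 2 * x * (c * d ^ 2 * x + c * d * e) - 2 * b * c * e ^ 2 * m ^ 2) * U ^ 2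
            + m ^ 2 * (c * d ^ 2 * x + c * d * e) ^ 2 := by
          simp [hR]
        rw [Polynomial.IsRoot, hev]
        linear_combination (-(U * w + m * (x * (2 * b * U ^ 2 - c * d ^ 2) - c * d * e))) * hw
          + U ^ 2 * hc
      · show (U, m * (x * (2 * b * U ^ 2 - c * d ^ 2) - c * d * e) / U) = (U, w)
        have : m * (x * (2 * b * U ^ 2 - c * d ^ 2) - c * d * e) / U = w := by
          rw [← hw]; field_simp
        rw [this]
    exact Set.Finite.subset ((Polynomial.finite_setOf_isRoot hRne).image _) this
  exact himg.mono (by rintro y ⟨P, hP, rfl⟩; exact hmem P hP)
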